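/- arXiv:2503.08246 — 2 statements merged into one kernel-verified Lean document; each statement's English description precedes it below -/
import Mathlib

section
/- For real numbers x, y and ε > 0, if η is chosen uniformly at random from [0, 2ε], then the probability that ⌊(x + η)/(2ε)⌋ ≠ ⌊(y + η)/(2ε)⌋ is at most |x − y|/(2ε). -/
open MeasureTheory

lemma aux_subset (x y c : ℝ) (hc : 0 < c) (hxy : x ≤ y) (hd : y - x ≤ c) :
    {η : ℝ | ⌊(x + η) / c⌋ ≠ ⌊(y + η) / c⌋} ∩ Set.Icc 0 c ⊆
      Set.Ico (max 0 ((⌊x / c⌋ + 1) * c - x - (y - x))) ((⌊x / c⌋ + 1) * c - x) ∪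
      Set.Icc ((⌊x / c⌋ + 1) * c - x + c - (y - x)) c := by
  rintro η ⟨hne, h0, hcc⟩
  have hlt : ⌊(x + η) / c⌋ < ⌊(y + η) / c⌋ := by
    refine lt_of_le_of_ne (Int.floor_mono ?_) hne
    gcongr
  set k : ℤ := ⌊(y + η) / c⌋ with hk
  have h1 : x + η < k * c := by
    have h : (x + η) / c < (k : ℝ) := by
      exact_mod_cast Int.floor_lt.mp hlt
    exact (div_lt_iff₀ hc).mp h
  have h2 : (k : ℝ) * c ≤ y + η := by
    have h := Int.floor_le ((y + η) / c)
    exact (le_div_iff₀ hc).mp h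
  have hk1 : ⌊x / c⌋ + 1 ≤ k := by
    have : x / c < (k : ℝ) := by
      rw [div_lt_iff₀ hc]; nlinarith
    have := Int.floor_lt.mpr this
    omega
  have hk2 : k ≤ ⌊x / c⌋ + 2 := by
    have hx : ((k : ℝ) - 2) ≤ x / c := by
      rw [le_div_iff₀ hc]; nlinarith
    have : (k - 2 : ℤ) ≤ ⌊x / c⌋ := Int.le_floor.mpr (by push_cast; linarith)
    omega
  set a : ℝ := (⌊x / c⌋ + 1) * c - x with ha
  rcases (by omega : k = ⌊x / c⌋ + 1 ∨ k = ⌊x / c⌋ + 2) with h | h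
  · left
    have hkc : (k : ℝ) * c = a + x := by rw [h, ha]; push_cast; ring
    refine ⟨max_le h0 (by linarith), by linarith⟩
  · right
    have hkc : (k : ℝ) * c = a + c + x := by rw [h, ha]; push_cast; ring
    constructor <;> linarith

lemma aux_vol (x y c : ℝ) (hc : 0 < c) (hxy : x ≤ y) (hd : y - x ≤ c) :
    volume ({η : ℝ | ⌊(x + η) / c⌋ ≠ ⌊(y + η) / c⌋} ∩ Set.Icc 0 c) ≤
      ENNReal.ofReal (y - x) := by
  set a : ℝ := (⌊x / c⌋ + 1) * c - x with ha
  set d : ℝ := y - x with hdd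
  have hd0 : 0 ≤ d := by linarith
  have hfl : (⌊x / c⌋ : ℝ) * c ≤ x := by
    have := mul_le_mul_of_nonneg_right (Int.floor_le (x / c)) hc.le
    rwa [div_mul_cancel₀ _ hc.ne'] at this
  have hfu : x < ((⌊x / c⌋ : ℝ) + 1) * c := by
    have := mul_lt_mul_of_pos_right (Int.lt_floor_add_one (x / c)) hc
    rwa [div_mul_cancel₀ _ hc.ne'] at this
  have hac : a ≤ c := by rw [ha]; nlinarith
  have ha0 : 0 ≤ a := by rw [ha]; nlinarith
  calc volume ({η : ℝ | ⌊(x + η) / c⌋ ≠ ⌊(y + η) / c⌋} ∩ Set.Icc 0 c)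
      ≤ volume (Set.Ico (max 0 (a - d)) a ∪ Set.Icc (a + c - d) c) :=
        measure_mono (aux_subset x y c hc hxy hd)
    _ ≤ volume (Set.Ico (max 0 (a - d)) a) + volume (Set.Icc (a + c - d) c) :=
        measure_union_le _ _
    _ = ENNReal.ofReal (a - max 0 (a - d)) + ENNReal.ofReal (c - (a + c - d)) := by
        rw [Real.volume_Ico, Real.volume_Icc]
    _ ≤ ENNReal.ofReal d := by
        rcases le_total d a with h | h
        · have h1 : max 0 (a - d) = a - d := by rw [max_eq_right]; linarith
          have h2 : c - (a + c - d) ≤ 0 := by linarith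
          rw [h1, ENNReal.ofReal_eq_zero.mpr h2]
          simp [ENNReal.ofReal_le_ofReal]
        · have h1 : max 0 (a - d) = 0 := by rw [max_eq_left]; linarith
          rw [h1, ← ENNReal.ofReal_add (by linarith) (by linarith)]
          apply ENNReal.ofReal_le_ofReal; linarith

lemma aux_main (x y ε : ℝ) (hε : 0 < ε) (hxy : x ≤ y) :
    ((ENNReal.ofReal (2 * ε))⁻¹ • (volume.restrict (Set.Icc (0:ℝ) (2 * ε))))
      {η : ℝ | ⌊(x + η) / (2 * ε)⌋ ≠ ⌊(y + η) / (2 * ε)⌋}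
      ≤ ENNReal.ofReal ((y - x) / (2 * ε)) := by
  have hc : (0:ℝ) < 2 * ε := by linarith
  have hcne : ENNReal.ofReal (2 * ε) ≠ 0 := by simp [hc, hε]
  have hcnt : ENNReal.ofReal (2 * ε) ≠ ⊤ := ENNReal.ofReal_ne_top
  rw [Measure.smul_apply, smul_eq_mul,
    Measure.restrict_apply' measurableSet_Icc]
  rcases le_total (y - x) (2 * ε) with hd | hd
  · calc (ENNReal.ofReal (2 * ε))⁻¹ *
        volume ({η : ℝ | ⌊(x + η) / (2 * ε)⌋ ≠ ⌊(y + η) / (2 * ε)⌋} ∩ Set.Icc 0 (2 * ε))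
        ≤ (ENNReal.ofReal (2 * ε))⁻¹ * ENNReal.ofReal (y - x) := by
          gcongr
          exact aux_vol x y (2 * ε) hc hxy hd
      _ = ENNReal.ofReal ((y - x) / (2 * ε)) := by
          rw [ENNReal.ofReal_div_of_pos hc, ENNReal.div_eq_inv_mul]
  · calc (ENNReal.ofReal (2 * ε))⁻¹ *
        volume ({η : ℝ | ⌊(x + η) / (2 * ε)⌋ ≠ ⌊(y + η) / (2 * ε)⌋} ∩ Set.Icc 0 (2 * ε))
        ≤ (ENNReal.ofReal (2 * ε))⁻¹ * volume (Set.Icc (0:ℝ) (2 * ε)) := by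
          gcongr
          exact Set.inter_subset_right
      _ = 1 := by
          rw [Real.volume_Icc]
          simp only [sub_zero]
          exact ENNReal.inv_mul_cancel hcne hcnt
      _ ≤ ENNReal.ofReal ((y - x) / (2 * ε)) := by
          rw [ENNReal.one_le_ofReal, le_div_iff₀ hc]
          linarith

/-- Single-coordinate collision bound: for η uniform on [0, 2ε], the probability
that ⌊(x+η)/(2ε)⌋ ≠ ⌊(y+η)/(2ε)⌋ is at most |x - y|/(2ε). -/
theorem stmt_0 (x y ε : ℝ) (hε : 0 < ε) :
    ((ENNReal.ofReal (2 * ε))⁻¹ • (volume.restrict (Set.Icc (0:ℝ) (2 * ε))))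
      {η : ℝ | ⌊(x + η) / (2 * ε)⌋ ≠ ⌊(y + η) / (2 * ε)⌋}
      ≤ ENNReal.ofReal (|x - y| / (2 * ε)) := by
  rcases le_total x y with h | h
  · rw [abs_of_nonpos (by linarith), neg_sub]
    exact aux_main x y ε hε h
  · rw [abs_of_nonneg (by linarith)]
    have := aux_main y x ε hε h
    convert this using 3
    · ext η; simp [ne_comm]
end

section
/- For real x, y and ε > 0 with y ≥ x, and η uniform on [0, 2ε], the set of η ∈ [0, 2ε] for which ⌊(x + η)/(2ε)⌋ ≠ ⌊(y + η)/(2ε)⌋ has Lebesgue measure at most (y − x) when y − x ≤ 2ε. -/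
open MeasureTheory

/-- The set of shifts η ∈ [0, 2ε] separating x and y under the shifted-grid
hash has Lebesgue measure at most y - x, when 0 ≤ y - x ≤ 2ε. -/
theorem stmt_5 (x y ε : ℝ) (hε : 0 < ε) (hxy : x ≤ y) (hclose : y - x ≤ 2 * ε) :
    volume {η : ℝ | η ∈ Set.Icc (0:ℝ) (2 * ε) ∧
        ⌊(x + η) / (2 * ε)⌋ ≠ ⌊(y + η) / (2 * ε)⌋}
      ≤ ENNReal.ofReal (y - x) := by
  set c : ℝ := 2 * ε with hc_def
  have hc : 0 < c := by positivity
  set k0 : ℤ := ⌊x / c⌋ with hk0_def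
  set a : ℝ := (k0 + 1) * c - y with ha_def
  set b : ℝ := (k0 + 1) * c - x with hb_def
  have hk0le : (k0 : ℝ) * c ≤ x := by
    have := Int.floor_le (x / c)
    calc (k0 : ℝ) * c ≤ (x / c) * c := by
          exact mul_le_mul_of_nonneg_right this hc.le
      _ = x := by field_simp
  have hxlt : x < ((k0 : ℝ) + 1) * c := by
    have := Int.lt_floor_add_one (x / c)
    calc x = (x / c) * c := by field_simp
      _ < ((k0 : ℝ) + 1) * c := by
          exact mul_lt_mul_of_pos_right this hc
  have hb_pos : 0 < b := by simp only [hb_def]; push_cast; linarith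
  have hba : b - a = y - x := by simp only [ha_def, hb_def]; ring
  -- subset
  have hsub : {η : ℝ | η ∈ Set.Icc (0:ℝ) c ∧
      ⌊(x + η) / c⌋ ≠ ⌊(y + η) / c⌋} ⊆
      Set.Ico (max a 0) b ∪ Set.Icc (a + c) c := by
    rintro η ⟨⟨hη0, hηc⟩, hne⟩
    have hmono : ⌊(x + η) / c⌋ ≤ ⌊(y + η) / c⌋ :=
      Int.floor_le_floor (by gcongr <;> linarith)
    have hlt : ⌊(x + η) / c⌋ < ⌊(y + η) / c⌋ := lt_of_le_of_ne hmono hne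
    set k : ℤ := ⌊(x + η) / c⌋ + 1 with hk_def
    have hk1 : x + η < (k : ℝ) * c := by
      have h1 := Int.lt_floor_add_one ((x + η) / c)
      have h2 : (x + η) / c < (k : ℝ) := by rw [hk_def]; push_cast; linarith
      calc x + η = ((x + η) / c) * c := by field_simp
        _ < (k : ℝ) * c := mul_lt_mul_of_pos_right h2 hc
    have hk2 : (k : ℝ) * c ≤ y + η := by
      have hkf : k ≤ ⌊(y + η) / c⌋ := by omega
      have : (k : ℝ) ≤ (y + η) / c := le_trans (by exact_mod_cast hkf) (Int.floor_le _)
      calc (k : ℝ) * c ≤ ((y + η) / c) * c :=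
            mul_le_mul_of_nonneg_right this hc.le
        _ = y + η := by field_simp
    have hklo : k0 + 1 ≤ k := by
      have : (k0 : ℝ) * c < (k : ℝ) * c := by linarith
      have : (k0 : ℝ) < (k : ℝ) := lt_of_mul_lt_mul_right this hc.le
      exact_mod_cast Int.add_one_le_iff.mpr (by exact_mod_cast this)
    have hkhi : k ≤ k0 + 2 := by
      have h1 : (k : ℝ) * c < ((k0 : ℝ) + 3) * c := by linarith
      have : (k : ℝ) < (k0 : ℝ) + 3 := lt_of_mul_lt_mul_right h1 hc.le
      have : k < k0 + 3 := by exact_mod_cast this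
      omega
    rcases (by omega : k = k0 + 1 ∨ k = k0 + 2) with hk | hk
    · left
      have hkc : (k : ℝ) * c = ((k0 : ℝ) + 1) * c := by rw [hk]; push_cast; ring
      refine ⟨max_le (by simp only [ha_def]; linarith [hkc ▸ hk2]) hη0, ?_⟩
      simp only [hb_def]; linarith [hkc ▸ hk1]
    · right
      have hkc : (k : ℝ) * c = ((k0 : ℝ) + 2) * c := by rw [hk]; push_cast; ring
      exact ⟨by simp only [ha_def]; linarith [hkc ▸ hk2], hηc⟩
  calc volume {η : ℝ | η ∈ Set.Icc (0:ℝ) c ∧ ⌊(x + η) / c⌋ ≠ ⌊(y + η) / c⌋}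
      ≤ volume (Set.Ico (max a 0) b ∪ Set.Icc (a + c) c) := measure_mono hsub
    _ ≤ volume (Set.Ico (max a 0) b) + volume (Set.Icc (a + c) c) := measure_union_le _ _
    _ = ENNReal.ofReal (b - max a 0) + ENNReal.ofReal (c - (a + c)) := by
        rw [Real.volume_Ico, Real.volume_Icc]
    _ ≤ ENNReal.ofReal (y - x) := by
        rcases le_or_gt 0 a with ha0 | ha0
        · rw [max_eq_left ha0]
          have : ENNReal.ofReal (c - (a + c)) = 0 := by
            rw [ENNReal.ofReal_eq_zero]; linarith
          rw [this, add_zero]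
          exact ENNReal.ofReal_le_ofReal (by linarith)
        · rw [max_eq_right ha0.le]
          rw [← ENNReal.ofReal_add (by linarith) (by linarith)]
          exact ENNReal.ofReal_le_ofReal (by linarith)
end
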